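/- Let X ⊆ ℝ² be open, f : X → ℝ² be C¹, and let Φ : ℝ × X → X be a C¹ map with ∂Φ/∂t(t,z) = f(Φ(t,z)) and Φ(0,z) = z for all (t,z) (the flow of f). Suppose: x, y ∈ X with f(x) ≠ 0 and f(y) ≠ 0; T > 0 with Φ(T, y) = x; σ : (−ε,ε) → X is a C¹ regular curve (a local parametrization of the impact surface S) with σ(0) = x and det(f(x), σ'(0)) ≠ 0; D : X → X is C¹ (the impact map) with D(x) = y; and τ, P : (−ε,ε) → ℝ are differentiable at 0 with τ(0) = T, P(0) = 0, and Φ(τ(u), D(σ(u))) = σ(P(u)) for all u ∈ (−ε,ε) (so P is the hybrid Poincaré return map in the coordinate u along S). Then the derivative of the Poincaré map satisfies P'(0) = [det(f(y), (D∘σ)'(0)) / det(f(x), σ'(0))] · exp(∫₀ᵀ (div f)(Φ(t,y)) dt), where div f = ∂f₁/∂x₁ + ∂f₂/∂x₂ and det(u,v) denotes the determinant of the 2×2 matrix with columns u and v. -/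

import Mathlib

open Filter Topology

/-- Determinant of the `2×2` matrix with columns `u, v ∈ ℝ²`. -/
def det2 (u v : ℝ × ℝ) : ℝ := u.1 * v.2 - u.2 * v.1

/-- Divergence of a planar vector field `f` at a point `z`. -/
noncomputable def divergence2 (f : ℝ × ℝ → ℝ × ℝ) (z : ℝ × ℝ) : ℝ :=
  (fderiv ℝ f z (1, 0)).1 + (fderiv ℝ f z (0, 1)).2

lemma pt_decomp (a : ℝ × ℝ) : a = a.1 • ((1:ℝ), (0:ℝ)) + a.2 • ((0:ℝ), (1:ℝ)) := by
  simp [Prod.ext_iff]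

lemma clm_apply_decomp (B : (ℝ×ℝ) →L[ℝ] (ℝ×ℝ)) (a : ℝ×ℝ) :
    B a = a.1 • B (1,0) + a.2 • B (0,1) := by
  conv_lhs => rw [pt_decomp a]
  rw [map_add, map_smul, map_smul]

lemma det2_trace (B : (ℝ×ℝ) →L[ℝ] (ℝ×ℝ)) (a b : ℝ×ℝ) :
    det2 (B a) b + det2 a (B b) = ((B (1,0)).1 + (B (0,1)).2) * det2 a b := by
  rw [clm_apply_decomp B a, clm_apply_decomp B b]
  simp only [det2, Prod.fst_add, Prod.snd_add, Prod.smul_fst, Prod.smul_snd, smul_eq_mul]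
  ring

lemma det2_comp (C : (ℝ×ℝ) →L[ℝ] (ℝ×ℝ)) (a b : ℝ×ℝ) :
    det2 (C a) (C b) = det2 (C (1,0)) (C (0,1)) * det2 a b := by
  rw [clm_apply_decomp C a, clm_apply_decomp C b]
  simp only [det2, Prod.fst_add, Prod.snd_add, Prod.smul_fst, Prod.smul_snd, smul_eq_mul]
  ring

lemma hasDerivAt_det2 {a b : ℝ → ℝ×ℝ} {a' b' : ℝ×ℝ} {t : ℝ}
    (ha : HasDerivAt a a' t) (hb : HasDerivAt b b' t) :
    HasDerivAt (fun s => det2 (a s) (b s)) (det2 a' (b t) + det2 (a t) b') t := by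
  have h1 : HasDerivAt (fun s => (a s).1) a'.1 t :=
    (ContinuousLinearMap.fst ℝ ℝ ℝ).hasFDerivAt.comp_hasDerivAt t ha
  have h2 : HasDerivAt (fun s => (a s).2) a'.2 t :=
    (ContinuousLinearMap.snd ℝ ℝ ℝ).hasFDerivAt.comp_hasDerivAt t ha
  have h3 : HasDerivAt (fun s => (b s).1) b'.1 t :=
    (ContinuousLinearMap.fst ℝ ℝ ℝ).hasFDerivAt.comp_hasDerivAt t hb
  have h4 : HasDerivAt (fun s => (b s).2) b'.2 t :=
    (ContinuousLinearMap.snd ℝ ℝ ℝ).hasFDerivAt.comp_hasDerivAt t hb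
  have h := (h1.mul h4).sub (h2.mul h3)
  exact h.congr_deriv (by simp only [det2]; ring)

/-- Derivative of the hybrid Poincaré return map (paper's Theorem `th:stability`,
coordinate-free form): with impact `D x = y` and continuous flow segment from `y`
back to `x ∈ S` of duration `T`, the return map `P` in the coordinate `u` of a regular
parametrization `σ` of `S` satisfies
`P'(0) = det(f(y), (D∘σ)'(0)) / det(f(x), σ'(0)) · exp ∫₀ᵀ div f (Φ(t,y)) dt`. -/
theorem hybrid_poincare_map_derivative
    (X : Set (ℝ × ℝ)) (hX : IsOpen X)
    (f : ℝ × ℝ → ℝ × ℝ) (hf : ContDiffOn ℝ 1 f X)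
    (Φ : ℝ × (ℝ × ℝ) → ℝ × ℝ)
    (hΦC1 : ContDiffOn ℝ 1 Φ (Set.univ ×ˢ X))
    (hΦmaps : ∀ t : ℝ, ∀ z ∈ X, Φ (t, z) ∈ X)
    (hΦflow : ∀ t : ℝ, ∀ z ∈ X, HasDerivAt (fun s => Φ (s, z)) (f (Φ (t, z))) t)
    (hΦ0 : ∀ z ∈ X, Φ (0, z) = z)
    (x y : ℝ × ℝ) (hxX : x ∈ X) (hyX : y ∈ X)
    (hfx : f x ≠ 0) (hfy : f y ≠ 0)
    (T : ℝ) (hT : 0 < T) (hreach : Φ (T, y) = x)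
    (ε : ℝ) (hε : 0 < ε)
    (σ : ℝ → ℝ × ℝ) (hσC1 : ContDiffOn ℝ 1 σ (Set.Ioo (-ε) ε))
    (hσmaps : Set.MapsTo σ (Set.Ioo (-ε) ε) X)
    (hσ0 : σ 0 = x) (hσreg : det2 (f x) (deriv σ 0) ≠ 0)
    (D : ℝ × ℝ → ℝ × ℝ) (hD : ContDiffOn ℝ 1 D X) (hDmaps : Set.MapsTo D X X)
    (hDx : D x = y)
    (τ P : ℝ → ℝ) (hτ : DifferentiableAt ℝ τ 0) (hP : DifferentiableAt ℝ P 0)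
    (hτ0 : τ 0 = T) (hP0 : P 0 = 0)
    (hret : ∀ u ∈ Set.Ioo (-ε) ε, Φ (τ u, D (σ u)) = σ (P u)) :
    deriv P 0 =
      (det2 (f y) (deriv (D ∘ σ) 0) / det2 (f x) (deriv σ 0)) *
        Real.exp (∫ t in (0:ℝ)..T, divergence2 f (Φ (t, y))) := by
  -- basic setup
  have hO : IsOpen (Set.univ ×ˢ X : Set (ℝ × (ℝ × ℝ))) := isOpen_univ.prod hX
  have hmemO : ∀ (t : ℝ) (z : ℝ × ℝ), z ∈ X → (t, z) ∈ (Set.univ ×ˢ X : Set (ℝ × (ℝ × ℝ))) :=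
    fun t z hz => ⟨trivial, hz⟩
  have hΦdiff : ∀ (t : ℝ) (z : ℝ × ℝ), z ∈ X → DifferentiableAt ℝ Φ (t, z) := by
    intro t z hz
    exact (hΦC1.differentiableOn one_ne_zero).differentiableAt (hO.mem_nhds (hmemO t z hz))
  -- the partial-in-z derivative along the orbit of y
  set inr2 : (ℝ × ℝ) →L[ℝ] ℝ × (ℝ × ℝ) := ContinuousLinearMap.inr ℝ ℝ (ℝ × ℝ) with hinr2
  have hmk : ∀ (t : ℝ) (z : ℝ × ℝ), HasFDerivAt (fun w : ℝ × ℝ => ((t : ℝ), w)) inr2 z :=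
    fun t z => hasFDerivAt_prodMk_right t z
  have hAz : ∀ (t : ℝ) (z : ℝ × ℝ), z ∈ X →
      HasFDerivAt (fun w => Φ (t, w)) ((fderiv ℝ Φ (t, z)).comp inr2) z := by
    intro t z hz
    exact ((hΦdiff t z hz).hasFDerivAt).comp z (hmk t z)
  have hγX : ∀ t : ℝ, Φ (t, y) ∈ X := fun t => hΦmaps t y hyX
  set A : ℝ → (ℝ × ℝ) →L[ℝ] (ℝ × ℝ) := fun t => (fderiv ℝ Φ (t, y)).comp inr2 with hAdef
  set B : ℝ → (ℝ × ℝ) →L[ℝ] (ℝ × ℝ) := fun t => fderiv ℝ f (Φ (t, y)) with hBdef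
  have hA : ∀ t : ℝ, HasFDerivAt (fun w => Φ (t, w)) (A t) y := fun t => hAz t y hyX
  -- continuity facts
  have hγcont : Continuous fun t : ℝ => Φ (t, y) :=
    continuous_iff_continuousAt.2 fun t => (hΦflow t y hyX).continuousAt
  have hfderivΦ : ContinuousOn (fderiv ℝ Φ) (Set.univ ×ˢ X) :=
    hΦC1.continuousOn_fderiv_of_isOpen hO le_rfl
  have hAcont : Continuous A := by
    have h1 : Continuous fun t : ℝ => fderiv ℝ Φ (t, y) :=
      hfderivΦ.comp_continuous (continuous_id.prodMk continuous_const)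
        (fun t => hmemO t y hyX)
    exact h1.clm_comp_const inr2
  have hfderivf : ContinuousOn (fderiv ℝ f) X := hf.continuousOn_fderiv_of_isOpen hX le_rfl
  have hBcont : Continuous B := hfderivf.comp_continuous hγcont hγX
  have hfd_at : ∀ z ∈ X, HasFDerivAt f (fderiv ℝ f z) z := by
    intro z hz
    exact ((hf.differentiableOn one_ne_zero).differentiableAt (hX.mem_nhds hz)).hasFDerivAt
  -- continuity of orbit maps from arbitrary initial points
  have hcontz : ∀ z ∈ X, Continuous fun s : ℝ => f (Φ (s, z)) := by
    intro z hz
    exact hf.continuousOn.comp_continuous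
      (continuous_iff_continuousAt.2 fun s => (hΦflow s z hz).continuousAt)
      (fun s => hΦmaps s z hz)
  -- integral representation of the flow
  have hFTC : ∀ z ∈ X, ∀ t : ℝ, Φ (t, z) = z + ∫ s in (0:ℝ)..t, f (Φ (s, z)) := by
    intro z hz t
    have h := intervalIntegral.integral_eq_sub_of_hasDerivAt
      (f := fun s => Φ (s, z)) (f' := fun s => f (Φ (s, z)))
      (fun s _ => hΦflow s z hz) ((hcontz z hz).intervalIntegrable 0 t)
    rw [h]
    show Φ (t, z) = z + (Φ (t, z) - Φ (0, z))
    rw [hΦ0 z hz]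
    abel
  -- g = f ∘ Φ is C¹
  set g : ℝ × (ℝ × ℝ) → ℝ × ℝ := fun p => f (Φ p) with hgdef
  have hgC1 : ContDiffOn ℝ 1 g (Set.univ ×ˢ X) := by
    apply hf.comp hΦC1
    intro p hp
    have := hΦmaps p.1 p.2 hp.2
    simpa using this
  have hfderivg : ContinuousOn (fderiv ℝ g) (Set.univ ×ˢ X) :=
    hgC1.continuousOn_fderiv_of_isOpen hO le_rfl
  have hgdiff : ∀ (t : ℝ) (z : ℝ × ℝ), z ∈ X → DifferentiableAt ℝ g (t, z) := by
    intro t z hz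
    exact (hgC1.differentiableOn one_ne_zero).differentiableAt (hO.mem_nhds (hmemO t z hz))
  set F' : ℝ → (ℝ × ℝ) → (ℝ × ℝ) →L[ℝ] (ℝ × ℝ) := fun t z => (fderiv ℝ g (t, z)).comp inr2
    with hF'def
  have hF'at : ∀ (t : ℝ) (z : ℝ × ℝ), z ∈ X →
      HasFDerivAt (fun w => f (Φ (t, w))) (F' t z) z := by
    intro t z hz
    exact ((hgdiff t z hz).hasFDerivAt).comp z (hmk t z)
  have hF'y : ∀ t : ℝ, F' t y = (B t).comp (A t) := by
    intro t
    have h2 : HasFDerivAt (fun w => f (Φ (t, w))) ((B t).comp (A t)) y :=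
      (hfd_at _ (hγX t)).comp y (hA t)
    exact (hF'at t y hyX).unique h2
  -- integral equation for A
  have hAint : ∀ t₀ : ℝ,
      A t₀ = ContinuousLinearMap.id ℝ (ℝ × ℝ) + ∫ s in (0:ℝ)..t₀, (B s).comp (A s) := by
    intro t₀
    obtain ⟨r, hr0, hrX⟩ : ∃ r > 0, Metric.closedBall y r ⊆ X := by
      obtain ⟨r, hr0, hball⟩ := Metric.isOpen_iff.1 hX y hyX
      exact ⟨r / 2, by linarith, (Metric.closedBall_subset_ball (by linarith)).trans hball⟩
    obtain ⟨C, hC⟩ : ∃ C, ∀ p ∈ (Set.uIcc (0:ℝ) t₀) ×ˢ Metric.closedBall y r,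
        ‖fderiv ℝ g p‖ ≤ C :=
      (isCompact_uIcc.prod (isCompact_closedBall y r)).exists_bound_of_continuousOn
        (hfderivg.mono (fun p hp => ⟨trivial, hrX hp.2⟩))
    have key := intervalIntegral.hasFDerivAt_integral_of_dominated_of_fderiv_le
      (F := fun z t => f (Φ (t, z))) (F' := fun z t => F' t z) (x₀ := y)
      (a := 0) (b := t₀) (bound := fun _ => C * ‖inr2‖) (μ := MeasureTheory.volume) (Metric.ball_mem_nhds y hr0)
      (by
        filter_upwards [hX.mem_nhds hyX] with z hz
        exact ((hcontz z hz).aestronglyMeasurable))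
      ((hcontz y hyX).intervalIntegrable 0 t₀)
      (by
        have hcF' : Continuous fun t => F' t y := by
          have h1 : Continuous fun t : ℝ => fderiv ℝ g (t, y) :=
            hfderivg.comp_continuous (continuous_id.prodMk continuous_const)
              (fun t => hmemO t y hyX)
          exact h1.clm_comp_const inr2
        exact hcF'.aestronglyMeasurable)
      (by
        refine MeasureTheory.ae_of_all _ fun t ht z hz => ?_
        have hmem : ((t, z) : ℝ × (ℝ × ℝ)) ∈ (Set.uIcc (0:ℝ) t₀) ×ˢ Metric.closedBall y r :=
          ⟨Set.uIoc_subset_uIcc ht, Metric.ball_subset_closedBall hz⟩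
        calc ‖F' t z‖ ≤ ‖fderiv ℝ g (t, z)‖ * ‖inr2‖ := ContinuousLinearMap.opNorm_comp_le _ _
          _ ≤ C * ‖inr2‖ := by
              exact mul_le_mul_of_nonneg_right (hC _ hmem) (norm_nonneg _))
      (intervalIntegrable_const)
      (by
        refine MeasureTheory.ae_of_all _ fun t ht z hz => ?_
        exact hF'at t z (hrX (Metric.ball_subset_closedBall hz)))
    have h2 : HasFDerivAt (fun z => Φ (t₀, z))
        (ContinuousLinearMap.id ℝ (ℝ × ℝ) + ∫ t in (0:ℝ)..t₀, F' t y) y := by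
      have h3 := (hasFDerivAt_id y).add key
      apply h3.congr_of_eventuallyEq
      filter_upwards [hX.mem_nhds hyX] with z hz using hFTC z hz t₀
    rw [(hA t₀).unique h2]
    congr 1
    exact intervalIntegral.integral_congr fun s _ => hF'y s
  -- the variational equation
  have hCcont : Continuous fun s => (B s).comp (A s) := hBcont.clm_comp hAcont
  have hAderiv : ∀ t : ℝ, HasDerivAt A ((B t).comp (A t)) t := by
    intro t
    have h1 : HasDerivAt
        (fun t₀ => ContinuousLinearMap.id ℝ (ℝ × ℝ) + ∫ s in (0:ℝ)..t₀, (B s).comp (A s))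
        ((B t).comp (A t)) t := by
      have h2 := (hCcont.integral_hasStrictDerivAt 0 t).hasDerivAt
      simpa using h2.const_add (ContinuousLinearMap.id ℝ (ℝ × ℝ))
    exact h1.congr_of_eventuallyEq (Filter.Eventually.of_forall hAint)
  -- A 0 = id
  have hA0 : A 0 = ContinuousLinearMap.id ℝ (ℝ × ℝ) := by
    have hid : HasFDerivAt (fun w => Φ (0, w)) (ContinuousLinearMap.id ℝ (ℝ × ℝ)) y := by
      have heq : (fun w => Φ (0, w)) =ᶠ[𝓝 y] id := by
        filter_upwards [hX.mem_nhds hyX] with z hz using hΦ0 z hz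
      exact (hasFDerivAt_id y).congr_of_eventuallyEq heq
    exact (hA 0).unique hid
  -- vector solutions of the variational equation
  have hAvec : ∀ (w : ℝ × ℝ) (t : ℝ), HasDerivAt (fun s => A s w) ((B t) (A t w)) t := by
    intro w t
    have h := (hAderiv t).clm_apply (hasDerivAt_const t w)
    simpa using h
  -- equivariance : A T (f y) = f x
  have hATfy : A T (f y) = f x := by
    obtain ⟨C, hC⟩ : ∃ C, ∀ s ∈ Set.Icc (0:ℝ) T, ‖B s‖ ≤ C :=
      isCompact_Icc.exists_bound_of_continuousOn hBcont.continuousOn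
    set K : NNReal := ⟨max C 0, le_max_right _ _⟩ with hKdef
    set v : ℝ → (ℝ × ℝ) → (ℝ × ℝ) := fun t w => B (max (min t T) 0) w with hvdef
    have hvlip : ∀ t : ℝ, LipschitzWith K (v t) := by
      intro t
      have hmem : max (min t T) 0 ∈ Set.Icc (0:ℝ) T :=
        ⟨le_max_right _ _, max_le ((min_le_right _ _)) hT.le⟩
      refine (B (max (min t T) 0)).lipschitz.weaken ?_
      rw [← NNReal.coe_le_coe]
      exact (hC _ hmem).trans (le_max_left _ _)
    have hueq : Set.EqOn (fun t => f (Φ (t, y))) (fun t => A t (f y)) (Set.Icc 0 T) := by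
      apply ODE_solution_unique hvlip
      · exact ((hf.continuousOn.comp_continuous hγcont hγX)).continuousOn
      · intro t ht
        have hu : HasDerivAt (fun t => f (Φ (t, y))) (B t (f (Φ (t, y)))) t :=
          (hfd_at _ (hγX t)).comp_hasDerivAt t (hΦflow t y hyX)
        have hclamp : max (min t T) 0 = t := by
          rw [min_eq_left ht.2.le, max_eq_left ht.1]
        have : v t (f (Φ (t, y))) = B t (f (Φ (t, y))) := by rw [hvdef]; simp [hclamp]
        rw [this]
        exact hu.hasDerivWithinAt
      · exact (hAcont.clm_apply continuous_const).continuousOn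
      · intro t ht
        have hclamp : max (min t T) 0 = t := by
          rw [min_eq_left ht.2.le, max_eq_left ht.1]
        have : v t (A t (f y)) = B t (A t (f y)) := by rw [hvdef]; simp [hclamp]
        rw [this]
        exact (hAvec (f y) t).hasDerivWithinAt
      · simp [hA0, hΦ0 y hyX]
    have := hueq ⟨le_refl 0, hT.le⟩
    have hT' := hueq ⟨hT.le, le_refl T⟩
    simp only at hT'
    rw [hreach] at hT'
    exact hT'.symm
  -- Liouville / Wronskian
  set W : ℝ → ℝ := fun t => det2 (A t (1, 0)) (A t (0, 1)) with hWdef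
  set I : ℝ → ℝ := fun t => ∫ s in (0:ℝ)..t, divergence2 f (Φ (s, y)) with hIdef
  have hdvgcont : Continuous fun t => divergence2 f (Φ (t, y)) := by
    have heq : (fun t => divergence2 f (Φ (t, y)))
        = fun t => (B t (1, 0)).1 + (B t (0, 1)).2 := rfl
    rw [heq]
    exact (continuous_fst.comp (hBcont.clm_apply continuous_const)).add
      (continuous_snd.comp (hBcont.clm_apply continuous_const))
  have hI : ∀ t : ℝ, HasDerivAt I (divergence2 f (Φ (t, y))) t := fun t =>
    (hdvgcont.integral_hasStrictDerivAt 0 t).hasDerivAt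
  have hW : ∀ t : ℝ, HasDerivAt W (divergence2 f (Φ (t, y)) * W t) t := by
    intro t
    have h := hasDerivAt_det2 (hAvec (1, 0) t) (hAvec (0, 1) t)
    convert h using 1
    exact (det2_trace (B t) (A t (1, 0)) (A t (0, 1))).symm
  have hE : ∀ t : ℝ, HasDerivAt (fun s => W s * Real.exp (-I s)) 0 t := by
    intro t
    have h := (hW t).mul ((hI t).neg.exp)
    exact h.congr_deriv (by ring)
  have hconst : W T * Real.exp (-I T) = W 0 * Real.exp (-I 0) :=
    is_const_of_deriv_eq_zero (fun s => (hE s).differentiableAt) (fun s => (hE s).deriv) T 0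
  have hW0 : W 0 = 1 := by
    rw [hWdef]; simp only [hA0, ContinuousLinearMap.id_apply]; simp [det2]
  have hI0 : I 0 = 0 := intervalIntegral.integral_same
  rw [hW0, hI0] at hconst
  simp only [neg_zero, Real.exp_zero, one_mul, mul_one] at hconst
  have hWT : W T = Real.exp (I T) := by
    calc W T = W T * Real.exp (-I T) * Real.exp (I T) := by
          rw [mul_assoc, ← Real.exp_add]; simp
      _ = Real.exp (I T) := by rw [hconst, one_mul]
  -- differentiating the return equation
  have h0ε : (0:ℝ) ∈ Set.Ioo (-ε) ε := ⟨by linarith, hε⟩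
  have hσdiff : HasDerivAt σ (deriv σ 0) 0 :=
    ((hσC1.differentiableOn one_ne_zero).differentiableAt (isOpen_Ioo.mem_nhds h0ε)).hasDerivAt
  have hDdiff : DifferentiableAt ℝ D x :=
    (hD.differentiableOn one_ne_zero).differentiableAt (hX.mem_nhds hxX)
  have hDσdiff : DifferentiableAt ℝ (D ∘ σ) 0 := by
    apply DifferentiableAt.comp
    · rw [hσ0]; exact hDdiff
    · exact hσdiff.differentiableAt
  have hDσ : HasDerivAt (D ∘ σ) (deriv (D ∘ σ) 0) 0 := hDσdiff.hasDerivAt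
  have hinner : HasDerivAt (fun u => (τ u, D (σ u))) ((deriv τ 0, deriv (D ∘ σ) 0)) 0 :=
    (hτ.hasDerivAt).prodMk hDσ
  have hΦat : HasFDerivAt Φ (fderiv ℝ Φ (T, y)) (τ 0, D (σ 0)) := by
    rw [hτ0, hσ0, hDx]
    exact (hΦdiff T y hyX).hasFDerivAt
  have hlhs : HasDerivAt (fun u => Φ (τ u, D (σ u)))
      ((fderiv ℝ Φ (T, y)) (deriv τ 0, deriv (D ∘ σ) 0)) 0 :=
    hΦat.comp_hasDerivAt 0 hinner
  have hσP : HasDerivAt σ (deriv σ 0) (P 0) := by rw [hP0]; exact hσdiff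
  have hrhs : HasDerivAt (fun u => σ (P u)) (deriv P 0 • deriv σ 0) 0 :=
    hσP.scomp 0 hP.hasDerivAt
  have heq : (fun u => Φ (τ u, D (σ u))) =ᶠ[𝓝 (0:ℝ)] fun u => σ (P u) := by
    filter_upwards [isOpen_Ioo.mem_nhds h0ε] with u hu using hret u hu
  have hlhs' : HasDerivAt (fun u => σ (P u))
      ((fderiv ℝ Φ (T, y)) (deriv τ 0, deriv (D ∘ σ) 0)) 0 :=
    hlhs.congr_of_eventuallyEq heq.symm
  have hder_eq : (fderiv ℝ Φ (T, y)) (deriv τ 0, deriv (D ∘ σ) 0) = deriv P 0 • deriv σ 0 :=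
    hlhs'.unique hrhs
  -- decompose the fderiv of Φ
  have hL1 : (fderiv ℝ Φ (T, y)) ((1:ℝ), (0:ℝ×ℝ)) = f x := by
    have hin : HasDerivAt (fun t : ℝ => ((t:ℝ), y)) (((1:ℝ), (0:ℝ×ℝ))) T :=
      (hasDerivAt_id T).prodMk (hasDerivAt_const T y)
    have h1 : HasDerivAt (fun t => Φ (t, y)) ((fderiv ℝ Φ (T, y)) (1, 0)) T :=
      ((hΦdiff T y hyX).hasFDerivAt).comp_hasDerivAt T hin
    have h2 := hΦflow T y hyX
    rw [hreach] at h2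
    exact h1.unique h2
  have hdecomp : (fderiv ℝ Φ (T, y)) (deriv τ 0, deriv (D ∘ σ) 0)
      = deriv τ 0 • f x + A T (deriv (D ∘ σ) 0) := by
    have hsplit : ((deriv τ 0, deriv (D ∘ σ) 0) : ℝ × (ℝ × ℝ))
        = deriv τ 0 • (((1:ℝ), (0:ℝ×ℝ))) + ((0:ℝ), deriv (D ∘ σ) 0) := by
      simp [Prod.ext_iff]
    rw [hsplit, map_add, map_smul, hL1]
    rfl
  have hkey : deriv τ 0 • f x + A T (deriv (D ∘ σ) 0) = deriv P 0 • deriv σ 0 := by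
    rw [← hdecomp]; exact hder_eq
  -- conclude
  have happ := congrArg (fun w => det2 (f x) w) hkey
  have hLfin : det2 (f x) (deriv τ 0 • f x + A T (deriv (D ∘ σ) 0)) =
      det2 (A T (f y)) (A T (deriv (D ∘ σ) 0)) := by
    rw [hATfy]
    simp only [det2, Prod.fst_add, Prod.snd_add, Prod.smul_fst, Prod.smul_snd, smul_eq_mul]
    ring
  have hRfin : det2 (f x) (deriv P 0 • deriv σ 0) = deriv P 0 * det2 (f x) (deriv σ 0) := by
    simp only [det2, Prod.smul_fst, Prod.smul_snd, smul_eq_mul]; ring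
  rw [hLfin, hRfin, det2_comp] at happ
  have hWT' : det2 (A T (1, 0)) (A T (0, 1))
      = Real.exp (∫ t in (0:ℝ)..T, divergence2 f (Φ (t, y))) := hWT
  rw [hWT'] at happ
  field_simp
  rw [← happ]
  ring
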